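/- Every feasible pair (x̄, ȳ) of the relaxed MPCaC problem is an AKKT point of that problem viewed as a standard nonlinear program. That is, for every feasible (x̄, ȳ) there exist sequences (x^k, y^k) → (x̄, ȳ) and multipliers (μ^{g,k}, μ^{h,k}, μ^{θ,k}, μ^{H,k}, μ^{H̃,k}, μ^{ξ,k}) ⊆ ℝ₊^m × ℝ^p × ℝ₊ × ℝ₊^n × ℝ₊^n × ℝ^n such that ∇f(x^k) + ∇g(x^k)μ^{g,k} + ∇h(x^k)μ^{h,k} + μ^{ξ,k} * y^k → 0, −μ^{θ,k} e − μ^{H,k} + μ^{H̃,k} + μ^{ξ,k} * x^k → 0, min{−g_i(x^k), μ_i^{g,k}} → 0 for all i, min{−θ(y^k), μ^{θ,k}} → 0, min{y_i^k, μ_i^{H,k}} → 0 for all i, and min{1 − y_i^k, μ_i^{H̃,k}} → 0 for all i. -/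

import Mathlib

open Filter Topology
open scoped Classical

noncomputable section

/-- `ℝⁿ` as a Euclidean space. -/
abbrev E (n : ℕ) : Type := EuclideanSpace ℝ (Fin n)

/-- The constraint function `θ(y) = n − α − eᵀ y` of the relaxed MPCaC problem. -/
def theta {n : ℕ} (α : ℕ) (y : E n) : ℝ := (n : ℝ) - (α : ℝ) - ∑ i, y i

/-- Feasibility for the relaxed MPCaC problem:
`g(x) ≤ 0, h(x) = 0, θ(y) ≤ 0, xᵢ yᵢ = 0, 0 ≤ yᵢ ≤ 1`. -/
def relFeas {n m p : ℕ} (g : E n → Fin m → ℝ) (h : E n → Fin p → ℝ) (α : ℕ)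
    (x y : E n) : Prop :=
  (∀ i, g x i ≤ 0) ∧ (∀ j, h x j = 0) ∧ theta α y ≤ 0 ∧
  (∀ i, x i * y i = 0) ∧ (∀ i, 0 ≤ y i ∧ y i ≤ 1)

/-- `∇f(x) + Σᵢ λᵍᵢ ∇gᵢ(x) + Σⱼ λʰⱼ ∇hⱼ(x)`. -/
def gradLx {n m p : ℕ} (f : E n → ℝ) (g : E n → Fin m → ℝ) (h : E n → Fin p → ℝ)
    (x : E n) (lg : Fin m → ℝ) (lh : Fin p → ℝ) : E n :=
  gradient f x + ∑ i, lg i • gradient (fun z => g z i) x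
    + ∑ j, lh j • gradient (fun z => h z j) x

/-- `i ∈ I_{0+}(x̄,ȳ) ∪ I_{01}(x̄,ȳ)`, i.e. `x̄ᵢ = 0` and (`0 < ȳᵢ < 1` or `ȳᵢ = 1`). -/
def inI0p01 {n : ℕ} (xb yb : E n) (i : Fin n) : Prop :=
  xb i = 0 ∧ ((0 < yb i ∧ yb i < 1) ∨ yb i = 1)

/-- Admissibility of the index set `I`: `I_{0+} ∪ I_{01} ⊆ I ⊆ I_0`. -/
def idxOK {n : ℕ} (xb yb : E n) (I : Finset (Fin n)) : Prop :=
  (∀ i, inI0p01 xb yb i → i ∈ I) ∧ (∀ i ∈ I, xb i = 0)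

/-- Feasibility for the tightened problem `TNLP_I(x̄,ȳ)`:
`g(x) ≤ 0, h(x) = 0, θ(y) ≤ 0, xᵢ = 0 (i ∈ I), −yᵢ ≤ 0 (i ∈ I_{0+} ∪ I_{01}),`
`−yᵢ = 0 (i ∈ I_{00} ∪ I_{±0}), y − e ≤ 0`. Note `I_{00} ∪ I_{±0} = {i | ȳᵢ = 0}`. -/
def tnlpFeas {n m p : ℕ} (g : E n → Fin m → ℝ) (h : E n → Fin p → ℝ) (α : ℕ)
    (xb yb : E n) (I : Finset (Fin n)) (x y : E n) : Prop :=
  (∀ i, g x i ≤ 0) ∧ (∀ j, h x j = 0) ∧ theta α y ≤ 0 ∧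
  (∀ i ∈ I, x i = 0) ∧
  (∀ i, inI0p01 xb yb i → -(y i) ≤ 0) ∧
  (∀ i, yb i = 0 → -(y i) = 0) ∧
  (∀ i, y i - 1 ≤ 0)

/-- `W_I`-stationarity for the relaxed MPCaC problem (Definition 2.9 of the paper). -/
def WStat {n m p : ℕ} (f : E n → ℝ) (g : E n → Fin m → ℝ) (h : E n → Fin p → ℝ)
    (α : ℕ) (xb yb : E n) (I : Finset (Fin n)) : Prop :=
  ∃ (lg : Fin m → ℝ) (lh : Fin p → ℝ) (lθ : ℝ) (lG : Fin n → ℝ) (lH lH' : Fin n → ℝ),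
    (∀ i, 0 ≤ lg i) ∧ 0 ≤ lθ ∧ (∀ i, 0 ≤ lH' i) ∧
    gradLx f g h xb lg lh + ∑ i ∈ I, lG i • EuclideanSpace.single i 1 = 0 ∧
    (∀ i, -lθ - lH i + lH' i = 0) ∧
    (∑ i, lg i * g xb i) = 0 ∧
    lθ * theta α yb = 0 ∧
    (∀ i, inI0p01 xb yb i → lH i = 0) ∧
    (∑ i, lH' i * (yb i - 1)) = 0

/-- Approximate weak (`AW`) stationarity for the relaxed MPCaC problem
(Definition 3.1 of the paper). -/
def AWStat {n m p : ℕ} (f : E n → ℝ) (g : E n → Fin m → ℝ) (h : E n → Fin p → ℝ)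
    (α : ℕ) (xb yb : E n) : Prop :=
  ∃ (x y : ℕ → E n) (lg : ℕ → Fin m → ℝ) (lh : ℕ → Fin p → ℝ) (lθ : ℕ → ℝ)
    (lG : ℕ → E n) (lH lH' : ℕ → Fin n → ℝ),
    (∀ k i, 0 ≤ lg k i) ∧ (∀ k, 0 ≤ lθ k) ∧ (∀ k i, 0 ≤ lH' k i) ∧
    Tendsto x atTop (𝓝 xb) ∧ Tendsto y atTop (𝓝 yb) ∧
    Tendsto (fun k => gradLx f g h (x k) (lg k) (lh k) + lG k) atTop (𝓝 0) ∧
    Tendsto (fun k i => -(lθ k) - lH k i + lH' k i) atTop (𝓝 (0 : Fin n → ℝ)) ∧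
    (∀ i, Tendsto (fun k => min (-(g (x k) i)) (lg k i)) atTop (𝓝 0)) ∧
    Tendsto (fun k => min (-(theta α (y k))) (lθ k)) atTop (𝓝 0) ∧
    (∀ i, Tendsto (fun k => min |x k i| |lG k i|) atTop (𝓝 0)) ∧
    (∀ i, Tendsto (fun k => min (y k i) |lH k i|) atTop (𝓝 0)) ∧
    (∀ i, Tendsto (fun k => min (1 - y k i) (lH' k i)) atTop (𝓝 0))

lemma sum_smul_single_eq {n : ℕ} (v : E n) :
    ∑ i, v i • EuclideanSpace.single i (1:ℝ) = v := by
  ext j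
  have : (∑ i, v i • EuclideanSpace.single i (1:ℝ)) j
      = ∑ i, (v i • EuclideanSpace.single i (1:ℝ)) j :=
    by rw [WithLp.ofLp_sum]; exact Finset.sum_apply j Finset.univ _
  rw [this]
  simp [EuclideanSpace.single_apply]

lemma abs_min_le_abs_left {c a : ℝ} (hc : 0 ≤ c) : |min a c| ≤ |a| := by
  rw [abs_le]
  constructor
  · exact le_min (neg_abs_le a) (le_trans (neg_nonpos.2 (abs_nonneg a)) hc)
  · exact le_trans (min_le_left _ _) (le_abs_self a)

/-- Theorem 4.1 of the paper. Every feasible pair `(x̄,ȳ)`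
of the relaxed MPCaC problem is an AKKT point of that problem viewed as a
standard NLP (with inequality constraints `g(x) ≤ 0`, `θ(y) ≤ 0`, `−y ≤ 0`,
`y − e ≤ 0` and equality constraints `h(x) = 0`, `xᵢ yᵢ = 0`). -/
theorem every_feasible_is_AKKT {n m p : ℕ}
    (f : E n → ℝ) (g : E n → Fin m → ℝ) (h : E n → Fin p → ℝ) (α : ℕ)
    (hf : ContDiff ℝ 1 f) (hg : ∀ i, ContDiff ℝ 1 (fun x => g x i))
    (hh : ∀ j, ContDiff ℝ 1 (fun x => h x j)) (hα : 0 < α) (hαn : α < n)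
    (xb yb : E n) (hfeas : relFeas g h α xb yb) :
    ∃ (x y : ℕ → E n) (μg : ℕ → Fin m → ℝ) (μh : ℕ → Fin p → ℝ) (μθ : ℕ → ℝ)
      (μH μH' : ℕ → Fin n → ℝ) (μξ : ℕ → Fin n → ℝ),
      (∀ k i, 0 ≤ μg k i) ∧ (∀ k, 0 ≤ μθ k) ∧ (∀ k i, 0 ≤ μH k i) ∧
      (∀ k i, 0 ≤ μH' k i) ∧
      Tendsto x atTop (𝓝 xb) ∧ Tendsto y atTop (𝓝 yb) ∧
      -- ∇ₓ Lagrangian → 0 :  ∇f + ∇g μ^g + ∇h μ^h + μ^ξ * y → 0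
      Tendsto (fun k => gradLx f g h (x k) (μg k) (μh k)
          + ∑ i, (μξ k i * y k i) • EuclideanSpace.single i 1) atTop (𝓝 0) ∧
      -- ∇_y Lagrangian → 0 :  −μ^θ e − μ^H + μ^H̃ + μ^ξ * x → 0
      Tendsto (fun k i => -(μθ k) - μH k i + μH' k i + μξ k i * x k i)
        atTop (𝓝 (0 : Fin n → ℝ)) ∧
      -- approximate complementarity
      (∀ i, Tendsto (fun k => min (-(g (x k) i)) (μg k i)) atTop (𝓝 0)) ∧
      Tendsto (fun k => min (-(theta α (y k))) (μθ k)) atTop (𝓝 0) ∧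
      (∀ i, Tendsto (fun k => min (y k i) (μH k i)) atTop (𝓝 0)) ∧
      (∀ i, Tendsto (fun k => min (1 - y k i) (μH' k i)) atTop (𝓝 0)) := by
  classical
  obtain ⟨hg0, hh0, hθ0, hxy, hy01⟩ := hfeas
  set G : E n := gradient f xb with hG
  have hxb0 : ∀ i, yb i ≠ 0 → xb i = 0 := by
    intro i hi
    rcases mul_eq_zero.1 (hxy i) with h' | h'
    · exact h'
    · exact absurd h' hi
  set σ : Fin n → ℝ := fun i => if 0 < G i * xb i then -1 else 1 with hσ
  set d : E n := WithLp.toLp 2 (fun i => if yb i = 0 then σ i else 0 : Fin n → ℝ) with hd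
  set ε : ℕ → ℝ := fun k => 1 / ((k : ℝ) + 1) with hε
  have hεpos : ∀ k, 0 < ε k := fun k => by positivity
  have hε1 : ∀ k, ε k ≤ 1 := by
    intro k
    rw [hε]
    rw [div_le_one (by positivity)]
    have : (0:ℝ) ≤ (k:ℝ) := Nat.cast_nonneg k
    linarith
  have hεlim : Tendsto ε atTop (𝓝 0) := tendsto_one_div_add_atTop_nhds_zero_nat
  set y : ℕ → E n := fun k => yb + ε k • d with hy
  have hyk : ∀ k i, y k i = yb i + ε k * d i := by
    intro k i
    simp [hy, PiLp.add_apply, PiLp.smul_apply, smul_eq_mul]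
  have hd0 : ∀ i, yb i ≠ 0 → d i = 0 := by
    intro i hi; simp [hd, hi]
  have hdσ : ∀ i, yb i = 0 → d i = σ i := by
    intro i hi; simp [hd, hi]
  have hykn : ∀ k i, yb i ≠ 0 → y k i = yb i := by
    intro k i hi; rw [hyk, hd0 i hi]; ring
  have hyk0 : ∀ k i, yb i = 0 → y k i = ε k * σ i := by
    intro k i hi; rw [hyk, hdσ i hi, hi]; ring
  have hσ1 : ∀ i, σ i = 1 ∨ σ i = -1 := by
    intro i; rw [hσ]; dsimp only; split <;> simp
  have hyne : ∀ k i, y k i ≠ 0 := by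
    intro k i
    by_cases hi : yb i = 0
    · rw [hyk0 k i hi]
      rcases hσ1 i with h' | h' <;> rw [h']
      · simpa using (hεpos k).ne'
      · simp only [mul_neg, mul_one, ne_eq, neg_eq_zero]
        exact (hεpos k).ne'
    · rw [hykn k i hi]; exact hi
  -- the multipliers
  set μH : ℕ → Fin n → ℝ := fun k i => -(G i * xb i) / y k i with hμHdef
  set μξ : ℕ → Fin n → ℝ := fun k i => -(G i) / y k i with hμξdef
  have hμHnn : ∀ k i, 0 ≤ μH k i := by
    intro k i
    by_cases hi : yb i = 0
    · rw [hμHdef]; dsimp only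
      rw [hyk0 k i hi]
      by_cases hpos : 0 < G i * xb i
      · have hσi : σ i = -1 := by rw [hσ]; simp [hpos]
        rw [hσi]
        have h5 : -(G i * xb i) / (ε k * -1) = (G i * xb i) / ε k := by ring
        rw [h5]
        exact div_nonneg hpos.le (hεpos k).le
      · have hσi : σ i = 1 := by rw [hσ]; simp [hpos]
        rw [hσi, mul_one]
        exact div_nonneg (by linarith [not_lt.1 hpos]) (hεpos k).le
    · rw [hμHdef]; dsimp only
      rw [hxb0 i hi]
      simp
  have hμH0 : ∀ k i, yb i ≠ 0 → μH k i = 0 := by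
    intro k i hi
    rw [hμHdef]; dsimp only
    rw [hxb0 i hi]; simp
  refine ⟨fun _ => xb, y, fun _ _ => 0, fun _ _ => 0, fun _ => 0, μH, fun _ _ => 0,
    μξ, fun _ _ => le_refl 0, fun _ => le_refl 0, hμHnn, fun _ _ => le_refl 0,
    tendsto_const_nhds, ?_, ?_, ?_, ?_, ?_, ?_, ?_⟩
  · -- y → yb
    have h1 : Tendsto (fun k => ε k • d) atTop (𝓝 ((0:ℝ) • d)) := hεlim.smul_const d
    rw [zero_smul] at h1
    have := (tendsto_const_nhds (x := yb) (f := atTop (α := ℕ))).add h1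
    rw [add_zero] at this
    simpa [hy] using this
  · -- x-gradient → 0
    have key : ∀ k, gradLx f g h xb (fun _ => (0:ℝ)) (fun _ => (0:ℝ))
        + ∑ i, (μξ k i * y k i) • EuclideanSpace.single i 1 = 0 := by
      intro k
      have h1 : ∀ i, μξ k i * y k i = -(G i) := by
        intro i
        rw [hμξdef]; exact div_mul_cancel₀ _ (hyne k i)
      have h2 : ∑ i, (μξ k i * y k i) • EuclideanSpace.single i (1:ℝ)
          = ∑ i, (-(G i)) • EuclideanSpace.single i (1:ℝ) :=
        Finset.sum_congr rfl fun i _ => by rw [h1 i]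
      have h3 : ∑ i, (-(G i)) • EuclideanSpace.single i (1:ℝ) = -G := by
        rw [← sum_smul_single_eq G, ← Finset.sum_neg_distrib]
        exact Finset.sum_congr rfl fun i _ => by
          rw [neg_smul]
          congr 1
          rw [sum_smul_single_eq]
      have h4 : gradLx f g h xb (fun _ => (0:ℝ)) (fun _ => (0:ℝ)) = G := by
        simp [gradLx, hG]
      rw [h2, h3, h4, add_neg_cancel]
    have : (fun k => gradLx f g h xb (fun _ => (0:ℝ)) (fun _ => (0:ℝ))
        + ∑ i, (μξ k i * y k i) • EuclideanSpace.single i 1) = fun _ => (0 : E n) :=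
      funext key
    rw [this]
    exact tendsto_const_nhds
  · -- y-gradient → 0
    have key : (fun k i => -(0:ℝ) - μH k i + 0 + μξ k i * xb i)
        = fun _ => (0 : Fin n → ℝ) := by
      funext k i
      rw [hμHdef, hμξdef]
      dsimp only
      simp only [Pi.zero_apply]
      ring
    rw [key]
    exact tendsto_const_nhds
  · -- min(-g, μg) → 0
    intro i
    have : (fun k : ℕ => min (-(g xb i)) (0:ℝ)) = fun _ => (0:ℝ) := by
      funext k
      exact min_eq_right (neg_nonneg.2 (hg0 i))
    rw [this]
    exact tendsto_const_nhds
  · -- min(-θ, μθ) → 0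
    have hθy : ∀ k, theta α (y k) = theta α yb - ε k * ∑ i, d i := by
      intro k
      simp only [theta]
      rw [Finset.mul_sum]
      rw [show (∑ i, y k i) = ∑ i, (yb i + ε k * d i) from
        Finset.sum_congr rfl fun i _ => hyk k i]
      rw [Finset.sum_add_distrib]
      ring
    have h2 : Tendsto (fun k => ε k * ∑ i, d i) atTop (𝓝 0) := by
      have h2' := hεlim.mul_const (∑ i, d i)
      rwa [zero_mul] at h2'
    have h3 : Tendsto (fun k => -(theta α (y k))) atTop (𝓝 (-(theta α yb))) := by
      simp only [hθy, neg_sub]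
      have := h2.sub (tendsto_const_nhds (x := theta α yb))
      simpa using this
    have h4 := h3.min (tendsto_const_nhds (x := (0:ℝ)) (f := atTop (α := ℕ)))
    rwa [min_eq_right (neg_nonneg.2 hθ0)] at h4
  · -- min(y, μH) → 0
    intro i
    by_cases hi : yb i = 0
    · refine squeeze_zero_norm (fun k => ?_) hεlim
      have hb : ‖min (y k i) (μH k i)‖ ≤ |y k i| := abs_min_le_abs_left (hμHnn k i)
      have : |y k i| = ε k := by
        rw [hyk0 k i hi]
        rcases hσ1 i with h' | h' <;> rw [h'] <;>
          simp [abs_of_pos (hεpos k), abs_of_nonneg (hεpos k).le]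
      rwa [this] at hb
    · have : (fun k : ℕ => min (y k i) (μH k i)) = fun _ => (0:ℝ) := by
        funext k
        rw [hykn k i hi, hμH0 k i hi]
        exact min_eq_right (hy01 i).1
      rw [this]
      exact tendsto_const_nhds
  · -- min(1 - y, μH') → 0
    intro i
    have hle1 : ∀ k, y k i ≤ 1 := by
      intro k
      by_cases hi : yb i = 0
      · rw [hyk0 k i hi]
        rcases hσ1 i with h' | h' <;> rw [h']
        · rw [mul_one]; exact hε1 k
        · have := hεpos k; nlinarith
      · rw [hykn k i hi]; exact (hy01 i).2
    have : (fun k : ℕ => min (1 - y k i) (0:ℝ)) = fun _ => (0:ℝ) := by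
      funext k
      exact min_eq_right (by linarith [hle1 k])
    rw [this]
    exact tendsto_const_nhds
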